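/- Let Γ be a simple graph on a vertex set V and, for each v ∈ V, let Λ_v be a simple graph with nonempty vertex set. Then the graph product graph ∗_{v,Γ} Λ_v is rigid if and only if for every vertex v ∈ V the graph Λ_v is rigid and, in addition, v satisfies at least one of the following two conditions: (1) Link_Γ(Link_Γ(v)) = {v}; (2) Λ_v has at least two vertices. -/

import Mathlib

/-- `linkSet G S` is the link of a set `S` of vertices in the simple graph `G`:
the set of vertices adjacent to every vertex of `S`.  (For `S = ∅` this is all of `V`.) -/
def linkSet {V : Type*} (G : SimpleGraph V) (S : Set V) : Set V :=
  {w | ∀ v ∈ S, G.Adj v w}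

/-- A simple graph is *rigid* if `Link(Link(v)) = {v}` for every vertex `v`. -/
def IsRigid {V : Type*} (G : SimpleGraph V) : Prop :=
  ∀ v : V, linkSet G (linkSet G {v}) = {v}

/-- The graph product `∗_{v,Γ} Λ_v` of a family of simple graphs `Λ v` over a simple
graph `Γ`: vertices are pairs `⟨v, s⟩` with `v ∈ Γ` and `s ∈ Λ v`, and distinct
vertices `⟨v, s⟩`, `⟨w, t⟩` are adjacent iff either `v = w` and `s, t` are adjacent in
`Λ v`, or `v ≠ w` and `v, w` are adjacent in `Γ`. -/
def graphProduct {V : Type*} (Γ : SimpleGraph V) (W : V → Type*)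
    (Λ : ∀ v : V, SimpleGraph (W v)) : SimpleGraph (Σ v : V, W v) where
  Adj p q := (∃ (v : V) (s t : W v), p = ⟨v, s⟩ ∧ q = ⟨v, t⟩ ∧ (Λ v).Adj s t) ∨
    (p.1 ≠ q.1 ∧ Γ.Adj p.1 q.1)
  symm := by
    constructor
    rintro p q (⟨v, s, t, rfl, rfl, h⟩ | ⟨hne, h⟩)
    · exact Or.inl ⟨v, t, s, rfl, rfl, h.symm⟩
    · exact Or.inr ⟨hne.symm, h.symm⟩
  loopless := by
    constructor
    rintro p (⟨v, s, t, rfl, hq, h⟩ | ⟨hne, _⟩)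
    · obtain rfl : s = t := by simpa using hq
      exact (Λ v).irrefl h
    · exact hne rfl

lemma mem_linkLink {α : Type*} (G : SimpleGraph α) (p q : α) :
    q ∈ linkSet G (linkSet G {p}) ↔ ∀ r, G.Adj p r → G.Adj r q := by
  simp [linkSet]

lemma graphProduct_adj {V : Type*} {W : V → Type*} (Γ : SimpleGraph V)
    (Λ : ∀ v : V, SimpleGraph (W v)) {v : V} {s : W v} {q : Σ v, W v} :
    (graphProduct Γ W Λ).Adj ⟨v, s⟩ q ↔
      (∃ t, q = ⟨v, t⟩ ∧ (Λ v).Adj s t) ∨ (q.1 ≠ v ∧ Γ.Adj v q.1) := by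
  constructor
  · rintro (⟨v', s', t', h1, rfl, h⟩ | ⟨hne, h⟩)
    · obtain ⟨rfl, h2⟩ := Sigma.mk.inj_iff.mp h1
      cases h2
      exact Or.inl ⟨t', rfl, h⟩
    · exact Or.inr ⟨hne.symm, h⟩
  · rintro (⟨t, rfl, h⟩ | ⟨hne, h⟩)
    · exact Or.inl ⟨v, s, t, rfl, rfl, h⟩
    · exact Or.inr ⟨hne.symm, h⟩

lemma mem_linkLink_graphProduct {V : Type*} {W : V → Type*} [∀ v, Nonempty (W v)]
    (Γ : SimpleGraph V) (Λ : ∀ v : V, SimpleGraph (W v)) {v : V} {s : W v}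
    {q : Σ v, W v} :
    q ∈ linkSet (graphProduct Γ W Λ) (linkSet (graphProduct Γ W Λ) {⟨v, s⟩}) ↔
      (∃ u, q = ⟨v, u⟩ ∧ ∀ t, (Λ v).Adj s t → (Λ v).Adj t u) ∨
      (q.1 ≠ v ∧ (∀ t, ¬ (Λ v).Adj s t) ∧ ∀ x, Γ.Adj v x → Γ.Adj x q.1) := by
  rw [mem_linkLink]
  constructor
  · intro H
    obtain ⟨w, u⟩ := q
    by_cases hwv : w = v
    · subst hwv
      left
      refine ⟨u, rfl, fun t ht => ?_⟩
      have h1 := H ⟨w, t⟩ ((graphProduct_adj Γ Λ).mpr (Or.inl ⟨t, rfl, ht⟩))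
      rcases (graphProduct_adj Γ Λ).mp h1 with ⟨t', h2, h⟩ | ⟨hne, _⟩
      · obtain ⟨-, h3⟩ := Sigma.mk.inj_iff.mp h2
        cases h3
        exact h
      · exact absurd rfl hne
    · right
      have hnw : ¬ Γ.Adj v w := by
        intro hadj
        have h1 := H ⟨w, u⟩ ((graphProduct_adj Γ Λ).mpr (Or.inr ⟨hwv, hadj⟩))
        exact (graphProduct Γ W Λ).irrefl h1
      refine ⟨hwv, ?_, ?_⟩
      · intro t ht
        have h1 := H ⟨v, t⟩ ((graphProduct_adj Γ Λ).mpr (Or.inl ⟨t, rfl, ht⟩))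
        rcases (graphProduct_adj Γ Λ).mp h1 with ⟨t', h2, h⟩ | ⟨hne, h⟩
        · exact hwv (congrArg Sigma.fst h2)
        · exact hnw h
      · intro x hx
        have hxv : x ≠ v := (Γ.ne_of_adj hx).symm
        obtain ⟨y⟩ := ‹∀ v, Nonempty (W v)› x
        have h1 := H ⟨x, y⟩ ((graphProduct_adj Γ Λ).mpr (Or.inr ⟨hxv, hx⟩))
        rcases (graphProduct_adj Γ Λ).mp h1 with ⟨t', h2, h⟩ | ⟨hne, h⟩
        · have hwx : w = x := congrArg Sigma.fst h2
          exact absurd (hwx ▸ hx) hnw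
        · exact h
  · rintro (⟨u, rfl, hu⟩ | ⟨hne, hempty, hw⟩) <;> intro p hp
    · rcases (graphProduct_adj Γ Λ).mp hp with ⟨t, rfl, ht⟩ | ⟨hne, hadj⟩
      · exact (graphProduct_adj Γ Λ).mpr (Or.inl ⟨u, rfl, hu t ht⟩)
      · obtain ⟨x, y⟩ := p
        exact (graphProduct_adj Γ Λ).mpr (Or.inr ⟨hne.symm, hadj.symm⟩)
    · rcases (graphProduct_adj Γ Λ).mp hp with ⟨t, rfl, ht⟩ | ⟨hne', hadj⟩
      · exact absurd ht (hempty t)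
      · obtain ⟨x, y⟩ := p
        have h1 := hw x hadj
        exact (graphProduct_adj Γ Λ).mpr (Or.inr ⟨(Γ.ne_of_adj h1).symm, h1⟩)

/-- **Rigidity of graph products of graphs.**  Let `Γ` be a simple graph and, for each
vertex `v`, let `Λ v` be a simple graph with nonempty vertex set.  Then the graph
product `∗_{v,Γ} Λ_v` is rigid if and only if for every vertex `v` the graph `Λ v` is
rigid and, moreover, `v` satisfies `Link_Γ(Link_Γ(v)) = {v}` or `Λ v` has at least two
vertices. -/
theorem isRigid_graphProduct_iff {V : Type*} {W : V → Type*} [∀ v, Nonempty (W v)]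
    (Γ : SimpleGraph V) (Λ : ∀ v : V, SimpleGraph (W v)) :
    IsRigid (graphProduct Γ W Λ) ↔
      ∀ v : V, IsRigid (Λ v) ∧
        (linkSet Γ (linkSet Γ {v}) = {v} ∨ ∃ s t : W v, s ≠ t) := by
  constructor
  · intro hG v
    constructor
    · intro s
      ext u
      simp only [Set.mem_singleton_iff]
      constructor
      · intro hu
        have h1 : (⟨v, u⟩ : Σ v, W v) ∈
            linkSet (graphProduct Γ W Λ) (linkSet (graphProduct Γ W Λ) {⟨v, s⟩}) :=
          (mem_linkLink_graphProduct Γ Λ).mpr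
            (Or.inl ⟨u, rfl, (mem_linkLink (Λ v) s u).mp hu⟩)
        rw [hG ⟨v, s⟩] at h1
        obtain ⟨-, h2⟩ := Sigma.mk.inj_iff.mp h1
        exact eq_of_heq h2
      · rintro rfl
        exact (mem_linkLink _ _ _).mpr fun t ht => ht.symm
    · by_cases hW : ∃ s t : W v, s ≠ t
      · exact Or.inr hW
      · left
        push_neg at hW
        obtain ⟨s⟩ := ‹∀ v, Nonempty (W v)› v
        ext w
        simp only [Set.mem_singleton_iff]
        constructor
        · intro hwmem
          by_contra hwv
          obtain ⟨u⟩ := ‹∀ v, Nonempty (W v)› w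
          have hmem : (⟨w, u⟩ : Σ v, W v) ∈
              linkSet (graphProduct Γ W Λ) (linkSet (graphProduct Γ W Λ) {⟨v, s⟩}) := by
            refine (mem_linkLink_graphProduct Γ Λ).mpr (Or.inr ⟨hwv, fun t ht => ?_,
              (mem_linkLink Γ v w).mp hwmem⟩)
            exact (Λ v).irrefl (hW s t ▸ ht)
          rw [hG ⟨v, s⟩] at hmem
          exact hwv (congrArg Sigma.fst hmem)
        · rintro rfl
          exact (mem_linkLink _ _ _).mpr fun x hx => hx.symm
  · intro h p
    obtain ⟨v, s⟩ := p
    obtain ⟨hrig, hdis⟩ := h v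
    ext q
    simp only [Set.mem_singleton_iff]
    constructor
    · intro hq
      rcases (mem_linkLink_graphProduct Γ Λ).mp hq with ⟨u, rfl, hu⟩ | ⟨hne, hempty, hw⟩
      · have h1 : u ∈ linkSet (Λ v) (linkSet (Λ v) {s}) := (mem_linkLink (Λ v) s u).mpr hu
        rw [hrig s] at h1
        exact congrArg (fun x => (⟨v, x⟩ : Σ v, W v)) h1
      · exfalso
        have hsub : ∀ u : W v, u = s := by
          intro u
          have h1 : u ∈ linkSet (Λ v) (linkSet (Λ v) {s}) :=
            (mem_linkLink (Λ v) s u).mpr fun t ht => absurd ht (hempty t)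
          rw [hrig s] at h1
          exact h1
        have hΓ : linkSet Γ (linkSet Γ {v}) = {v} := by
          rcases hdis with h1 | ⟨a, b, hab⟩
          · exact h1
          · exact (hab ((hsub a).trans (hsub b).symm)).elim
        have h2 : q.1 ∈ linkSet Γ (linkSet Γ {v}) := (mem_linkLink Γ v q.1).mpr hw
        rw [hΓ] at h2
        exact hne h2
    · rintro rfl
      exact (mem_linkLink_graphProduct Γ Λ).mpr (Or.inl ⟨s, rfl, fun t ht => ht.symm⟩)
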